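/- Let Φ_n be the n-th monic orthogonal polynomial of a nontrivial probability measure on the unit circle and λ ∈ ∂𝔻. Then the paraorthogonal polynomial Φ_{n+1}(z; λ) = zΦ_n(z) − conj(λ)Φ_n^*(z) has n+1 distinct zeros, all lying on the unit circle. -/

import Mathlib

open Polynomial

/-- The reversed, coefficient-conjugated polynomial `τ_n(p)(z) = z^n conj(p(1/conj z))`. -/
noncomputable def polyStar (n : ℕ) (p : Polynomial ℂ) : Polynomial ℂ :=
  (p.map (starRingEnd ℂ)).reflect n

/-- The paraorthogonal polynomial `Φ_{n+1}(z;λ) = zΦ_n(z) − conj(λ)Φ_n^*(z)` has `n+1`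
distinct zeros, all on the unit circle. -/

lemma polyStar_prod (M : Multiset ℂ) :
    polyStar (Multiset.card M) ((M.map fun a => X - C a).prod)
      = (M.map fun a => 1 - C ((starRingEnd ℂ) a) * X).prod := by
  induction M using Multiset.induction_on with
  | empty => simp [polyStar]
  | cons a M ih =>
    have hdegM : ((M.map fun a => X - C a).prod.map (starRingEnd ℂ)).natDegree ≤ Multiset.card M := by
      refine le_trans natDegree_map_le ?_
      refine le_trans (natDegree_multiset_prod_le _) ?_
      simp [Multiset.map_map, Function.comp]
    have h1 : ((X - C a : Polynomial ℂ).map (starRingEnd ℂ)).natDegree ≤ 1 := by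
      simp [Polynomial.map_sub]
    simp only [Multiset.map_cons, Multiset.prod_cons, Multiset.card_cons, polyStar] at *
    rw [Polynomial.map_mul]
    rw [show Multiset.card M + 1 = 1 + Multiset.card M by ring]
    rw [reflect_mul _ _ h1 hdegM, ih]
    congr 1
    rw [Polynomial.map_sub, map_X, map_C]
    rw [show (X : Polynomial ℂ) = X^1 by ring, reflect_sub, reflect_monomial, reflect_C]
    simp [revAt_le]

lemma normSq_key (a z : ℂ) :
    Complex.normSq (1 - (starRingEnd ℂ) a * z) - Complex.normSq (z - a)
      = (1 - Complex.normSq a) * (1 - Complex.normSq z) := by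
  simp only [Complex.normSq_apply, Complex.sub_re, Complex.sub_im, Complex.one_re,
    Complex.one_im, Complex.mul_re, Complex.mul_im, Complex.conj_re, Complex.conj_im]
  ring

lemma norm_sq_key (a z : ℂ) :
    ‖1 - (starRingEnd ℂ) a * z‖^2 - ‖z - a‖^2 = (1 - ‖a‖^2) * (1 - ‖z‖^2) := by
  simpa [Complex.sq_norm] using normSq_key a z

lemma norm_multiset_prod' (s : Multiset ℂ) : ‖s.prod‖ = (s.map fun x => ‖x‖).prod := by
  simpa using map_multiset_prod (normHom.toMonoidHom : ℂ →* ℝ) s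

/-- The paraorthogonal polynomial `Φ_{n+1}(z;λ) = zΦ_n(z) − conj(λ)Φ_n^*(z)` has `n+1`
distinct zeros, all on the unit circle. -/
theorem popuc_zeros_on_circle
    (n : ℕ) (Φ : Polynomial ℂ) (hmonic : Φ.Monic) (hdeg : Φ.natDegree = n)
    (hzeros : ∀ z : ℂ, Φ.IsRoot z → ‖z‖ < 1)
    (lam : ℂ) (hlam : ‖lam‖ = 1) :
    ∃ S : Finset ℂ, S.card = n + 1 ∧
      (∀ u : ℂ, (X * Φ - C ((starRingEnd ℂ) lam) * polyStar n Φ).IsRoot u ↔ u ∈ S) ∧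
      (∀ u ∈ S, ‖u‖ = 1) := by
  classical
  set lc := (starRingEnd ℂ) lam with hlc
  have hlcnorm : ‖lc‖ = 1 := by rw [hlc]; simpa using hlam
  have hlcne : lc ≠ 0 := by
    intro h; rw [h] at hlcnorm; simp at hlcnorm
  set P := X * Φ - C lc * polyStar n Φ with hP
  set M := Φ.roots with hMdef
  have hcard : Multiset.card M = n := by
    rw [hMdef, ← hdeg]
    exact splits_iff_card_roots.mp (IsAlgClosed.splits Φ)
  have hΦ : (M.map fun a => X - C a).prod = Φ :=
    prod_multiset_X_sub_C_of_monic_of_roots_card_eq hmonic (hcard.trans hdeg.symm)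
  have hM : ∀ a ∈ M, ‖a‖ < 1 := fun a ha => hzeros a (isRoot_of_mem_roots ha)
  set Q := (M.map fun a => 1 - C ((starRingEnd ℂ) a) * X).prod with hQdef
  have hQ : polyStar n Φ = Q := by
    have := polyStar_prod M
    rw [hΦ, hcard] at this
    exact this.symm ▸ rfl
  have hFeval : ∀ u : ℂ, eval u Φ = (M.map fun a => u - a).prod := by
    intro u; rw [← hΦ, eval_multiset_prod]; simp [Multiset.map_map, Function.comp]
  have hGeval : ∀ u : ℂ, eval u Q = (M.map fun a => 1 - (starRingEnd ℂ) a * u).prod := by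
    intro u; rw [hQdef, eval_multiset_prod]; simp [Multiset.map_map, Function.comp]
  -- root equation
  have hrooteq : ∀ u : ℂ, P.IsRoot u → u * eval u Φ = lc * eval u Q := by
    intro u hu
    have h := hu
    simp only [hP, IsRoot, eval_sub, eval_mul, eval_X, eval_C, hQ] at h
    exact sub_eq_zero.mp h
  -- norms equation
  have hnormeq : ∀ u : ℂ, P.IsRoot u →
      ‖u‖ * (M.map fun a => ‖u - a‖).prod = (M.map fun a => ‖1 - (starRingEnd ℂ) a * u‖).prod := by
    intro u hu
    have h := congrArg norm (hrooteq u hu)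
    rw [norm_mul, norm_mul, hlcnorm, one_mul, hFeval, hGeval,
      norm_multiset_prod', norm_multiset_prod', Multiset.map_map, Multiset.map_map] at h
    simpa [Function.comp] using h
  -- all roots on the circle
  have hcirc : ∀ u : ℂ, P.IsRoot u → ‖u‖ = 1 := by
    intro u hu
    by_contra hne
    have h := hnormeq u hu
    rcases lt_or_gt_of_ne hne with hlt | hgt
    · have hle : ∀ a ∈ M, ‖u - a‖ ≤ ‖1 - (starRingEnd ℂ) a * u‖ := by
        intro a ha
        have hk := norm_sq_key a u
        have h1 : (0:ℝ) ≤ (1 - ‖a‖^2) * (1 - ‖u‖^2) := by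
          have h2 := hM a ha
          exact mul_nonneg (by nlinarith [norm_nonneg a]) (by nlinarith [norm_nonneg u])
        nlinarith [norm_nonneg (u - a), norm_nonneg (1 - (starRingEnd ℂ) a * u)]
      have hqpos : (0:ℝ) < (M.map fun a => ‖1 - (starRingEnd ℂ) a * u‖).prod := by
        refine Multiset.prod_pos ?_
        intro x hx
        rw [Multiset.mem_map] at hx
        obtain ⟨a, ha, rfl⟩ := hx
        rw [norm_pos_iff]
        intro h0
        have h1 : ‖(starRingEnd ℂ) a * u‖ < 1 := by
          rw [norm_mul]
          have h2 : ‖(starRingEnd ℂ) a‖ = ‖a‖ := by simp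
          nlinarith [hM a ha, norm_nonneg u, norm_nonneg a]
        have h2 : (1 : ℂ) = (starRingEnd ℂ) a * u := by
          have := sub_eq_zero.mp h0; exact this
        rw [← h2] at h1; simp at h1
      have hple : (M.map fun a => ‖u - a‖).prod ≤ (M.map fun a => ‖1 - (starRingEnd ℂ) a * u‖).prod :=
        Multiset.prod_map_le_prod_map₀ _ _ (fun a _ => norm_nonneg _) hle
      have hppos : (0:ℝ) ≤ (M.map fun a => ‖u - a‖).prod :=
        Multiset.prod_nonneg (by intro x hx; rw [Multiset.mem_map] at hx; obtain ⟨a, _, rfl⟩ := hx; exact norm_nonneg _)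
      have h3 := mul_le_mul_of_nonneg_left hple (norm_nonneg u)
      have h4 := mul_lt_mul_of_pos_right hlt hqpos
      linarith
    · have hle : ∀ a ∈ M, ‖1 - (starRingEnd ℂ) a * u‖ ≤ ‖u - a‖ := by
        intro a ha
        have hk := norm_sq_key a u
        have h1 : (1 - ‖a‖^2) * (1 - ‖u‖^2) ≤ 0 := by
          have h2 := hM a ha
          exact mul_nonpos_of_nonneg_of_nonpos (by nlinarith [norm_nonneg a]) (by nlinarith)
        nlinarith [norm_nonneg (u - a), norm_nonneg (1 - (starRingEnd ℂ) a * u)]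
      have hppos : (0:ℝ) < (M.map fun a => ‖u - a‖).prod := by
        refine Multiset.prod_pos ?_
        intro x hx
        rw [Multiset.mem_map] at hx
        obtain ⟨a, ha, rfl⟩ := hx
        have := hM a ha
        have h1 : ‖a‖ < ‖u‖ := by nlinarith
        have h2 := norm_sub_norm_le u a  -- ‖u‖ - ‖a‖ ≤ ‖u - a‖
        linarith
      have hqle : (M.map fun a => ‖1 - (starRingEnd ℂ) a * u‖).prod ≤ (M.map fun a => ‖u - a‖).prod :=
        Multiset.prod_map_le_prod_map₀ _ _ (fun a _ => norm_nonneg _) hle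
      have h3 := mul_lt_mul_of_pos_right hgt hppos
      linarith
  -- nonvanishing of the derivative at roots
  have hder : ∀ u : ℂ, P.IsRoot u → eval u (derivative P) ≠ 0 := by
    intro u hu
    have hu1 : ‖u‖ = 1 := hcirc u hu
    have hune : u ≠ 0 := by intro h; rw [h] at hu1; simp at hu1
    have huconj : u * (starRingEnd ℂ) u = 1 := by
      rw [Complex.mul_conj]
      norm_cast
      rw [Complex.normSq_eq_norm_sq, hu1]; norm_num
    set F := eval u Φ with hF
    set G := eval u Q with hG
    have hFne : F ≠ 0 := by
      intro h
      have := hzeros u h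
      rw [hu1] at this; exact lt_irrefl 1 this
    have huFG : u * F = lc * G := hrooteq u hu
    have hGne : G ≠ 0 := by
      intro h
      rw [h, mul_zero] at huFG
      exact hune (by
        rcases mul_eq_zero.mp huFG with h1 | h1
        · exact h1
        · exact absurd h1 hFne)
    -- per element data
    set E : ℂ → ℂ := fun a => ((M.erase a).map fun b => u - b).prod with hE
    set Eq' : ℂ → ℂ := fun a => ((M.erase a).map fun b => 1 - (starRingEnd ℂ) b * u).prod with hEq'
    set c : ℂ → ℂ := fun a =>
      (1 - a * (starRingEnd ℂ) a) / ((u - a) * ((starRingEnd ℂ) u - (starRingEnd ℂ) a)) with hc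
    set r : ℂ → ℝ := fun a => (1 - Complex.normSq a) / Complex.normSq (u - a) with hr
    have hrsub : ∀ a : ℂ, (starRingEnd ℂ) (u - a) = (starRingEnd ℂ) u - (starRingEnd ℂ) a :=
      fun a => map_sub _ _ _
    have hrne : ∀ a ∈ M, u - a ≠ 0 := by
      intro a ha h
      have h1 : u = a := by linear_combination h
      rw [h1] at hu1
      exact absurd hu1 (ne_of_lt (hM a ha))
    have hkey : ∀ a ∈ M,
        u^2 * E a + lc * ((starRingEnd ℂ) a * u * Eq' a) = lc * G * c a := by
      intro a ha
      have hra := hrne a ha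
      have hcra : (starRingEnd ℂ) u - (starRingEnd ℂ) a ≠ 0 := by
        intro h; exact hra (by simpa using congrArg (starRingEnd ℂ) h)
      have hEa : (u - a) * E a = F := by
        rw [hF, hFeval u, hE]
        exact Multiset.prod_map_erase (f := fun b => u - b) ha
      have hfac : (1 : ℂ) - (starRingEnd ℂ) a * u = u * ((starRingEnd ℂ) u - (starRingEnd ℂ) a) := by
        linear_combination -huconj
      have hEqa : (u * ((starRingEnd ℂ) u - (starRingEnd ℂ) a)) * Eq' a = G := by
        rw [← hfac, hG, hGeval u, hEq']
        exact Multiset.prod_map_erase (f := fun b => 1 - (starRingEnd ℂ) b * u) ha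
      have hd : (u - a) * ((starRingEnd ℂ) u - (starRingEnd ℂ) a) ≠ 0 := mul_ne_zero hra hcra
      apply mul_left_cancel₀ hd
      have hdc : ((u - a) * ((starRingEnd ℂ) u - (starRingEnd ℂ) a)) * c a
          = 1 - a * (starRingEnd ℂ) a := by
        rw [hc]
        field_simp
      rw [show ((u - a) * ((starRingEnd ℂ) u - (starRingEnd ℂ) a)) * (lc * G * c a)
          = (((u - a) * ((starRingEnd ℂ) u - (starRingEnd ℂ) a)) * c a) * (lc * G) by ring, hdc]
      linear_combination (((starRingEnd ℂ) u - (starRingEnd ℂ) a) * u^2) * hEa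
        + (lc * (starRingEnd ℂ) a * (u - a)) * hEqa
        + (((starRingEnd ℂ) u - (starRingEnd ℂ) a) * u) * huFG
        + (lc * G) * huconj
    -- evaluate derivatives
    have evms : ∀ (s : Multiset (Polynomial ℂ)), eval u s.sum = (s.map (eval u)).sum := by
      intro s
      simpa [coe_evalRingHom] using map_multiset_sum (evalRingHom u) s
    have hDF : eval u (derivative Φ) = (M.map E).sum := by
      rw [← hΦ, derivative_prod, evms, Multiset.map_map]
      refine congrArg Multiset.sum (Multiset.map_congr rfl ?_)
      intro a ha
      simp only [Function.comp_apply, derivative_X_sub_C, mul_one, eval_multiset_prod,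
        Multiset.map_map, hE]
      refine congrArg Multiset.prod (Multiset.map_congr rfl ?_)
      intro b hb
      simp
    have hDQ : eval u (derivative Q) = (M.map fun a => -((starRingEnd ℂ) a) * Eq' a).sum := by
      rw [hQdef, derivative_prod, evms, Multiset.map_map]
      refine congrArg Multiset.sum (Multiset.map_congr rfl ?_)
      intro a ha
      have hder1 : derivative (1 - C ((starRingEnd ℂ) a) * X) = -C ((starRingEnd ℂ) a) := by
        rw [derivative_sub, derivative_one, derivative_C_mul_X]
        ring
      simp only [Function.comp_apply, hder1, eval_mul, eval_neg, eval_C, eval_multiset_prod,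
        Multiset.map_map, hEq']
      rw [mul_comm]
      congr 1
      refine congrArg Multiset.prod (Multiset.map_congr rfl ?_)
      intro b hb
      simp
    have hPQ : derivative P = Φ + X * derivative Φ - C lc * derivative Q := by
      rw [hP, hQ, derivative_sub, derivative_mul, derivative_mul, derivative_X, derivative_C]
      ring
    have h1 : eval u (derivative P)
        = F + u * (M.map E).sum - lc * (M.map fun a => -((starRingEnd ℂ) a) * Eq' a).sum := by
      rw [hPQ]
      simp [hDF, hDQ, ← hF, ← hG]
    have hmul : ∀ (k : ℂ) (g : ℂ → ℂ), (M.map fun a => k * g a).sum = k * (M.map g).sum :=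
      fun k g => Multiset.sum_map_mul_left
    have e1 : (M.map fun a => u^2 * E a).sum = u^2 * (M.map E).sum := hmul (u^2) E
    have e2 : (M.map fun a => lc * ((starRingEnd ℂ) a * u * Eq' a)).sum
        = (-(lc * u)) * (M.map fun a => -((starRingEnd ℂ) a) * Eq' a).sum := by
      rw [← hmul (-(lc * u)) (fun a => -((starRingEnd ℂ) a) * Eq' a)]
      refine congrArg Multiset.sum (Multiset.map_congr rfl ?_)
      intro a ha
      ring
    have h2 : u * eval u (derivative P)
        = lc * G + (M.map fun a => u^2 * E a + lc * ((starRingEnd ℂ) a * u * Eq' a)).sum := by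
      rw [Multiset.sum_map_add, e1, e2, h1]
      rw [mul_sub, mul_add, ← huFG]
      ring
    have h4 : ∀ a ∈ M, c a = ((r a : ℝ) : ℂ) := by
      intro a ha
      rw [hc, hr]
      simp only
      rw [← hrsub a, Complex.mul_conj, Complex.mul_conj]
      push_cast
      ring
    have hcast : (M.map fun a => ((r a : ℝ) : ℂ)).sum = (((M.map r).sum : ℝ) : ℂ) := by
      rw [show (M.map fun a => ((r a : ℝ) : ℂ)) = (M.map r).map Complex.ofRealHom by
        rw [Multiset.map_map]; rfl]
      exact (map_multiset_sum Complex.ofRealHom (M.map r)).symm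
    have h5 : (M.map fun a => u^2 * E a + lc * ((starRingEnd ℂ) a * u * Eq' a)).sum
        = lc * G * (((M.map r).sum : ℝ) : ℂ) := by
      rw [Multiset.map_congr rfl hkey,
        Multiset.map_congr rfl (fun a ha => by rw [h4 a ha] :
          ∀ a ∈ M, lc * G * c a = lc * G * ((r a : ℝ) : ℂ)),
        hmul (lc * G) (fun a => ((r a : ℝ) : ℂ)), hcast]
    have h6 : u * eval u (derivative P) = lc * G * (1 + (((M.map r).sum : ℝ) : ℂ)) := by
      rw [h2, h5]; ring
    have hrnonneg : (0:ℝ) ≤ (M.map r).sum := by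
      refine Multiset.sum_nonneg ?_
      intro x hx
      obtain ⟨a, ha, rfl⟩ := Multiset.mem_map.mp hx
      rw [hr]
      refine div_nonneg ?_ (Complex.normSq_nonneg _)
      have h7 : Complex.normSq a < 1 := by
        rw [Complex.normSq_eq_norm_sq]
        nlinarith [hM a ha, norm_nonneg a]
      linarith
    have hfactor : (1 : ℂ) + (((M.map r).sum : ℝ) : ℂ) ≠ 0 := by
      intro h0
      have h8 := congrArg Complex.re h0
      simp at h8
      linarith
    intro h0
    rw [h0, mul_zero] at h6
    exact (mul_ne_zero (mul_ne_zero hlcne hGne) hfactor) h6.symm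
  -- degree and monicity of P
  have hQdeg : Q.natDegree ≤ n := by
    refine le_trans (natDegree_multiset_prod_le _) ?_
    rw [Multiset.map_map]
    refine le_trans (Multiset.sum_le_card_nsmul _ 1 ?_) ?_
    · intro x hx
      obtain ⟨a, ha, rfl⟩ := Multiset.mem_map.mp hx
      simp only [Function.comp_apply]
      refine le_trans (natDegree_sub_le _ _) ?_
      exact max_le (by simp) (le_trans (natDegree_C_mul_le _ _) (natDegree_X (R := ℂ)).le)
    · simp [hcard]
  have hXΦmonic : (X * Φ).Monic := monic_X.mul hmonic
  have hXΦdeg : (X * Φ).natDegree = n + 1 := by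
    rw [natDegree_mul X_ne_zero hmonic.ne_zero, natDegree_X, hdeg]
    ring
  have hCQdeg : (C lc * polyStar n Φ).degree < (X * Φ).degree := by
    have hd1 : (C lc * polyStar n Φ).natDegree ≤ n := by
      refine le_trans (natDegree_mul_le) ?_
      rw [natDegree_C, hQ]
      simpa using hQdeg
    have hd2 : (C lc * polyStar n Φ).degree ≤ (n : WithBot ℕ) :=
      le_trans degree_le_natDegree (by exact_mod_cast hd1)
    refine lt_of_le_of_lt hd2 ?_
    rw [degree_eq_natDegree hXΦmonic.ne_zero, hXΦdeg]
    exact_mod_cast Nat.lt_succ_self n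
  have hPmonic : P.Monic := by
    rw [hP, sub_eq_add_neg]
    refine (monic_X.mul hmonic).add_of_left ?_
    rwa [degree_neg]
  have hPne : P ≠ 0 := hPmonic.ne_zero
  have hPdeg : P.natDegree = n + 1 := by
    have hdeq : P.degree = (X * Φ).degree := by
      rw [hP, sub_eq_add_neg]
      exact degree_add_eq_left_of_degree_lt (by rwa [degree_neg])
    rw [natDegree_eq_of_degree_eq hdeq, hXΦdeg]
  have hProots : Multiset.card P.roots = n + 1 := by
    rw [← hPdeg]
    exact splits_iff_card_roots.mp (IsAlgClosed.splits P)
  have hnodup : P.roots.Nodup := by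
    rw [Multiset.nodup_iff_count_le_one]
    intro u
    rw [count_roots]
    by_contra hcon
    push_neg at hcon
    have h2 : 2 ≤ rootMultiplicity u P := hcon
    have hdvd : (X - C u)^2 ∣ P := dvd_trans (pow_dvd_pow _ h2) (P.pow_rootMultiplicity_dvd u)
    obtain ⟨g, hg⟩ := hdvd
    have hroot : P.IsRoot u := by
      rw [IsRoot, hg]
      simp
    have hdz : eval u (derivative P) = 0 := by
      rw [hg, derivative_mul, derivative_pow]
      simp
    exact hder u hroot hdz
  refine ⟨P.roots.toFinset, ?_, ?_, ?_⟩
  · rw [Multiset.toFinset_card_eq_card_iff_nodup.mpr hnodup, hProots]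
  · intro v
    rw [Multiset.mem_toFinset, mem_roots hPne]
  · intro v hv
    exact hcirc v ((mem_roots hPne).mp (Multiset.mem_toFinset.mp hv))
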